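/- Let Γ be a group acting transitively on a finite nonempty set Ω such that the stabilizer of every point of Ω is a torsion-free subgroup of Γ. Then the order of every finite subgroup of Γ divides |Ω|. -/

import Mathlib

/-- A monoid is torsion-free if no element other than `1` has finite order
(the Mathlib definition of December 2024, since removed). -/
def Monoid.IsTorsionFree (G : Type*) [Monoid G] : Prop :=
  ∀ g : G, g ≠ 1 → ¬IsOfFinOrder g

/-- If `Γ` acts transitively on a finite nonempty set `Ω` with all point stabilizers
torsion free, then the order of every finite subgroup of `Γ` divides `|Ω|`. -/
theorem finite_subgroup_order_dvd_card
    {Γ Ω : Type*} [Group Γ] [MulAction Γ Ω] [Finite Ω] [Nonempty Ω]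
    (htrans : MulAction.IsPretransitive Γ Ω)
    (hstab : ∀ a : Ω, Monoid.IsTorsionFree ↥(MulAction.stabilizer Γ a))
    (F : Subgroup Γ) (hF : Finite F) :
    Nat.card F ∣ Nat.card Ω := by
  classical
  have : Fintype F := Fintype.ofFinite F
  have : Fintype Ω := Fintype.ofFinite Ω
  -- Every element of F fixing a point is trivial.
  have key : ∀ (a : Ω) (x : F), (x : Γ) • a = a → x = 1 := by
    intro a x hxa
    by_contra hne
    have hmem : (x : Γ) ∈ MulAction.stabilizer Γ a := hxa
    set g : MulAction.stabilizer Γ a := ⟨(x : Γ), hmem⟩ with hg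
    have hgne : g ≠ 1 := by
      intro h
      apply hne
      ext
      have h' := congrArg Subtype.val h
      exact h'
    have hfin : IsOfFinOrder g := by
      obtain ⟨n, hn, hxn⟩ := isOfFinOrder_iff_pow_eq_one.mp (isOfFinOrder_of_finite x)
      refine isOfFinOrder_iff_pow_eq_one.mpr ⟨n, hn, ?_⟩
      ext
      have : ((x : Γ)) ^ n = 1 := by
        simpa using congrArg Subtype.val hxn
      simpa using this
    exact hstab a g hgne hfin
  -- Stabilizers of the restricted F-action are trivial.
  have hstabF : ∀ a : Ω, Fintype.card (MulAction.stabilizer F a) = 1 := by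
    intro a
    rw [Fintype.card_eq_one_iff]
    refine ⟨⟨1, one_smul _ _⟩, ?_⟩
    rintro ⟨x, hx⟩
    exact Subtype.ext (key a x hx)
  -- Each orbit of F has cardinality Nat.card F.
  have horb : ∀ a : Ω, Fintype.card (MulAction.orbit F a) = Fintype.card F := by
    intro a
    have := MulAction.card_orbit_mul_card_stabilizer_eq_card_group F a
    rwa [hstabF a, mul_one] at this
  have e := MulAction.selfEquivSigmaOrbits F Ω
  have hcard : Fintype.card Ω =
      Fintype.card (MulAction.orbitRel.Quotient F Ω) * Fintype.card F := by
    rw [Fintype.card_congr e, Fintype.card_sigma]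
    simp [horb, Finset.sum_const, mul_comm]
  rw [Nat.card_eq_fintype_card, Nat.card_eq_fintype_card, hcard]
  exact Dvd.intro_left _ rfl
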